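/- Fix N ∈ ℕ with N ≥ 1, and set κ = 2N+1 and N₊ = N + ½. Then the limit as ξ → ∞ of φ_N(√κ · ξ) · 2√π · κ^{1/6} · (ξ² − 1)^{1/4} · exp{κ · (½ ξ √(ξ²−1) − ½ log(ξ + √(ξ²−1)))} exists and equals 2√π · κ^{1/6} · h_N^{−1/2} · (2N₊)^{N/2} · e^{−N₊/2} · 2^{N − N₊}, where h_N = √π · 2^N · N!. -/

import Mathlib

open Real Filter MeasureTheory

/-- Physicists' Hermite polynomial `H_n(x) = (-1)^n e^{x²} (d^n/dx^n) e^{-x²}`. -/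
noncomputable def physHermite (n : ℕ) (x : ℝ) : ℝ :=
  (-1 : ℝ) ^ n * Real.exp (x ^ 2) * iteratedDeriv n (fun t : ℝ => Real.exp (-t ^ 2)) x

/-- Normalizing constant `h_n = √π 2^n n!`. -/
noncomputable def hNorm (n : ℕ) : ℝ := Real.sqrt Real.pi * 2 ^ n * (n.factorial : ℝ)

/-- Oscillator wave function `φ_n(x) = h_n^{-1/2} e^{-x²/2} H_n(x)`. -/
noncomputable def osc (n : ℕ) (x : ℝ) : ℝ :=
  hNorm n ^ (-(1 : ℝ) / 2) * Real.exp (-x ^ 2 / 2) * physHermite n x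

/-- Airy function `Ai(x) = π⁻¹ lim_{R→∞} ∫₀^R cos(t³/3 + xt) dt`. -/
noncomputable def Ai (x : ℝ) : ℝ :=
  Real.pi⁻¹ *
    limUnder Filter.atTop (fun R : ℝ => ∫ t in (0 : ℝ)..R, Real.cos (t ^ 3 / 3 + x * t))

/-- Scaling constant `τ_N = 2^{-1/2} N^{-1/6}`. -/
noncomputable def tauN (N : ℕ) : ℝ := (2 : ℝ) ^ (-(1 : ℝ) / 2) * (N : ℝ) ^ (-(1 : ℝ) / 6)

/-- `Δ_N = (√(2N+1) - √(2N-1))/τ_N`. -/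
noncomputable def DeltaN (N : ℕ) : ℝ :=
  (Real.sqrt (2 * N + 1) - Real.sqrt (2 * N - 1)) / tauN N

section Aux

open Polynomial Asymptotics

lemma sqrt2_sq' : (Real.sqrt 2) ^ 2 = 2 := Real.sq_sqrt (by norm_num)

lemma physHermite_eq' (n : ℕ) (x : ℝ) :
    physHermite n x = (Real.sqrt 2) ^ n * aeval (Real.sqrt 2 * x) (hermite n) := by
  have hg : ContDiff ℝ n (fun y : ℝ => Real.exp (-(y ^ 2 / 2))) := by
    apply ContDiff.exp
    have : ContDiff ℝ n (fun y : ℝ => y ^ 2 / 2) := (contDiff_id.pow 2).div_const 2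
    exact this.neg
  have h1 : (fun t : ℝ => Real.exp (-t ^ 2)) =
      fun t : ℝ => (fun y : ℝ => Real.exp (-(y ^ 2 / 2))) (Real.sqrt 2 * t) := by
    funext t
    simp only
    rw [mul_pow, sqrt2_sq']
    ring_nf
  have h3 : iteratedDeriv n (fun t : ℝ => Real.exp (-t ^ 2)) x
      = (Real.sqrt 2) ^ n *
        iteratedDeriv n (fun y : ℝ => Real.exp (-(y ^ 2 / 2))) (Real.sqrt 2 * x) := by
    rw [h1, iteratedDeriv_comp_const_mul hg (Real.sqrt 2)]
  have h4 : iteratedDeriv n (fun y : ℝ => Real.exp (-(y ^ 2 / 2))) (Real.sqrt 2 * x)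
      = (-1 : ℝ) ^ n * aeval (Real.sqrt 2 * x) (hermite n) *
        Real.exp (-((Real.sqrt 2 * x) ^ 2 / 2)) := by
    rw [iteratedDeriv_eq_iterate]
    exact Polynomial.deriv_gaussian_eq_hermite_mul_gaussian n _
  have h5 : (Real.sqrt 2 * x) ^ 2 = 2 * x ^ 2 := by rw [mul_pow, sqrt2_sq']
  rw [physHermite, h3, h4, h5]
  have hE : Real.exp (x ^ 2) * Real.exp (-(2 * x ^ 2 / 2)) = 1 := by
    rw [← Real.exp_add]; ring_nf; exact Real.exp_zero
  have hsgn : ((-1 : ℝ) ^ n) * ((-1 : ℝ) ^ n) = 1 := by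
    rw [← pow_add]; exact Even.neg_one_pow ⟨n, by ring⟩
  calc (-1:ℝ) ^ n * Real.exp (x ^ 2) *
        (Real.sqrt 2 ^ n * ((-1:ℝ) ^ n * aeval (Real.sqrt 2 * x) (hermite n) *
          Real.exp (-(2 * x ^ 2 / 2))))
      = (((-1:ℝ)^n) * ((-1:ℝ)^n)) * (Real.exp (x ^ 2) * Real.exp (-(2 * x ^ 2 / 2))) *
        (Real.sqrt 2 ^ n * aeval (Real.sqrt 2 * x) (hermite n)) := by ring
    _ = _ := by rw [hE, hsgn]; ring

lemma hermite_ratio (n : ℕ) :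
    Tendsto (fun y : ℝ => aeval y (hermite n) / y ^ n) atTop (nhds 1) := by
  set P : Polynomial ℝ := (hermite n).map (algebraMap ℤ ℝ) with hP
  have hlc : P.leadingCoeff = 1 := by
    rw [hP, Polynomial.leadingCoeff_map_of_leadingCoeff_ne_zero, Polynomial.leadingCoeff_hermite]
    · simp
    · rw [Polynomial.leadingCoeff_hermite]; simp
  have hdeg : P.natDegree = n := by
    rw [hP, Polynomial.natDegree_map_of_leadingCoeff_ne_zero, Polynomial.natDegree_hermite]
    rw [Polynomial.leadingCoeff_hermite]; simp
  have h := Polynomial.isEquivalent_atTop_lead P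
  rw [hlc, hdeg] at h
  have hz : ∀ᶠ y : ℝ in atTop, (1 : ℝ) * y ^ n ≠ 0 := by
    filter_upwards [eventually_gt_atTop (0:ℝ)] with y hy
    simp [pow_ne_zero, ne_of_gt hy]
  have h2 := (isEquivalent_iff_tendsto_one hz).mp h
  have he : ∀ y : ℝ, aeval y (hermite n) = P.eval y := by
    intro y; rw [hP, Polynomial.eval_map, Polynomial.aeval_def]
  simp only [he]
  simpa [Pi.div_def] using h2

lemma one_sub_inv_sq_tendsto : Tendsto (fun ξ : ℝ => 1 - 1/ξ^2) atTop (nhds 1) := by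
  have := (tendsto_pow_atTop (two_ne_zero)).inv_tendsto_atTop (α := ℝ)
  have h' : Tendsto (fun ξ : ℝ => 1/ξ^2) atTop (nhds 0) := by
    simpa [one_div, Pi.inv_def] using this
  simpa using tendsto_const_nhds.sub h'

lemma u_tendsto :
    Tendsto (fun ξ : ℝ => (1/2)*ξ*Real.sqrt (ξ^2-1) - ξ^2/2
      - (1/2)*Real.log (ξ + Real.sqrt (ξ^2-1)) + (1/2)*Real.log ξ)
      atTop (nhds (-(1/4) - (1/2)*Real.log 2)) := by
  have ht : Tendsto (fun ξ : ℝ => Real.sqrt (1 - 1/ξ^2)) atTop (nhds 1) := by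
    have := (Real.continuous_sqrt.tendsto 1).comp one_sub_inv_sq_tendsto
    simpa [Function.comp_def] using this
  have h1 : Tendsto (fun ξ : ℝ => -1/(Real.sqrt (1 - 1/ξ^2)+1)) atTop (nhds (-1/2)) := by
    have hd : Tendsto (fun ξ : ℝ => Real.sqrt (1 - 1/ξ^2)+1) atTop (nhds 2) := by
      simpa [one_add_one_eq_two] using ht.add_const 1
    exact tendsto_const_nhds.div hd (by norm_num)
  have h2 : Tendsto (fun ξ : ℝ => Real.log (1 + Real.sqrt (1 - 1/ξ^2))) atTop
      (nhds (Real.log 2)) := by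
    have hd : Tendsto (fun ξ : ℝ => 1 + Real.sqrt (1 - 1/ξ^2)) atTop (nhds 2) := by
      simpa [one_add_one_eq_two] using ht.const_add 1
    exact ((Real.continuousAt_log (by norm_num)).tendsto).comp hd
  have hr : Tendsto (fun ξ : ℝ => (1/2)*(-1/(Real.sqrt (1 - 1/ξ^2)+1))
      - (1/2)*Real.log (1 + Real.sqrt (1 - 1/ξ^2))) atTop
      (nhds (-(1/4) - (1/2)*Real.log 2)) := by
    have := (h1.const_mul (1/2)).sub (h2.const_mul (1/2))
    convert this using 2
    norm_num
  refine hr.congr' ?_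
  filter_upwards [eventually_gt_atTop (1:ℝ)] with ξ hξ
  have hξ0 : 0 < ξ := lt_trans one_pos hξ
  have hsq : (0:ℝ) < ξ^2 - 1 := by nlinarith
  set s := Real.sqrt (ξ^2-1) with hs
  have hs0 : 0 < s := Real.sqrt_pos.mpr hsq
  have hs2 : s^2 = ξ^2 - 1 := Real.sq_sqrt hsq.le
  have htval : Real.sqrt (1 - 1/ξ^2) = s/ξ := by
    rw [show 1 - 1/ξ^2 = (s/ξ)^2 by field_simp; linarith [hs2]]
    exact Real.sqrt_sq (by positivity)
  rw [htval]
  have e1 : (1/2)*(-1/(s/ξ+1)) = (1/2)*ξ*s - ξ^2/2 := by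
    have hne : s + ξ ≠ 0 := by positivity
    field_simp
    nlinarith [hs2]
  have e2 : Real.log (1 + s/ξ) = Real.log (ξ + s) - Real.log ξ := by
    rw [show 1 + s/ξ = (ξ+s)/ξ by field_simp]
    exact Real.log_div (by positivity) (ne_of_gt hξ0)
  rw [e1, e2]
  ring

end Aux

open Polynomial in
/-- Identification of the connection coefficient: with `κ = 2N+1` and `N₊ = N + ½`,
`φ_N(√κ ξ) · 2√π κ^{1/6} (ξ²-1)^{1/4} exp{κ(½ξ√(ξ²-1) - ½log(ξ+√(ξ²-1)))}` converges as
`ξ → ∞` to `2√π κ^{1/6} h_N^{-1/2} (2N₊)^{N/2} e^{-N₊/2} 2^{N-N₊}`. -/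
theorem connection_coefficient_limit (N : ℕ) (hN : 1 ≤ N) :
    Filter.Tendsto
      (fun ξ : ℝ =>
        osc N (Real.sqrt (2 * N + 1) * ξ) * (2 * Real.sqrt Real.pi) *
          (2 * (N : ℝ) + 1) ^ ((1 : ℝ) / 6) * (ξ ^ 2 - 1) ^ ((1 : ℝ) / 4) *
          Real.exp ((2 * (N : ℝ) + 1) *
            ((1 / 2) * ξ * Real.sqrt (ξ ^ 2 - 1) -
              (1 / 2) * Real.log (ξ + Real.sqrt (ξ ^ 2 - 1)))))
      Filter.atTop
      (nhds (2 * Real.sqrt Real.pi * (2 * (N : ℝ) + 1) ^ ((1 : ℝ) / 6) *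
        hNorm N ^ (-(1 : ℝ) / 2) * (2 * ((N : ℝ) + 1 / 2)) ^ ((N : ℝ) / 2) *
        Real.exp (-((N : ℝ) + 1 / 2) / 2) *
        (2 : ℝ) ^ ((N : ℝ) - ((N : ℝ) + 1 / 2)))) := by
  have hκ0 : (0:ℝ) < 2*(N:ℝ)+1 := by positivity
  set κ : ℝ := 2*(N:ℝ)+1 with hκdef
  set sκ : ℝ := Real.sqrt κ with hsκdef
  have hsκ0 : 0 < sκ := Real.sqrt_pos.mpr hκ0
  have hsκ2 : sκ^2 = κ := Real.sq_sqrt hκ0.le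
  set c : ℝ := Real.sqrt 2 * sκ with hcdef
  have hc0 : 0 < c := by positivity
  set C : ℝ := hNorm N ^ (-(1:ℝ)/2) * (2 * Real.sqrt Real.pi) * κ ^ ((1:ℝ)/6) with hCdef
  -- limit of the polynomial factor
  have hA : Tendsto (fun ξ : ℝ => physHermite N (sκ * ξ) / ξ^N) atTop
      (nhds (2^N * sκ^N)) := by
    have hcomp : Tendsto (fun ξ : ℝ => aeval (c*ξ) (hermite N) / (c*ξ)^N) atTop (nhds 1) := by
      have hm : Tendsto (fun ξ : ℝ => c * ξ) atTop atTop :=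
        Tendsto.const_mul_atTop hc0 tendsto_id
      exact (hermite_ratio N).comp hm
    have hA' := hcomp.const_mul ((Real.sqrt 2)^N * c^N)
    have heq : (fun ξ : ℝ => ((Real.sqrt 2)^N * c^N) * (aeval (c*ξ) (hermite N) / (c*ξ)^N))
        =ᶠ[atTop] (fun ξ : ℝ => physHermite N (sκ * ξ) / ξ^N) := by
      filter_upwards [eventually_gt_atTop (0:ℝ)] with ξ hξ
      rw [physHermite_eq', show Real.sqrt 2 * (sκ * ξ) = c * ξ by rw [hcdef]; ring, mul_pow]
      field_simp
      ring
    have h2c : (Real.sqrt 2)^N * c^N = 2^N * sκ^N := by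
      rw [hcdef, mul_pow, ← mul_assoc, ← mul_pow,
        Real.mul_self_sqrt (by norm_num : (0:ℝ) ≤ 2)]
    have := hA'.congr' heq
    rw [mul_one, h2c] at this
    exact this
  -- limit of the algebraic prefactor
  have hB : Tendsto (fun ξ : ℝ => (1 - 1/ξ^2) ^ ((1:ℝ)/4)) atTop (nhds 1) := by
    have := one_sub_inv_sq_tendsto.rpow_const (p := (1:ℝ)/4) (Or.inr (by norm_num))
    simpa using this
  -- limit of the exponential factor
  have hE : Tendsto (fun ξ : ℝ => Real.exp (κ * ((1/2)*ξ*Real.sqrt (ξ^2-1) - ξ^2/2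
      - (1/2)*Real.log (ξ + Real.sqrt (ξ^2-1)) + (1/2)*Real.log ξ))) atTop
      (nhds (Real.exp (κ * (-(1/4) - (1/2)*Real.log 2)))) := by
    have := (Real.continuous_exp.tendsto _).comp (u_tendsto.const_mul κ)
    simpa [Function.comp_def] using this
  have hG := (((tendsto_const_nhds (x := C)).mul hA).mul hB).mul hE
  -- eventual equality with the target function
  have heq : (fun ξ : ℝ => C * (physHermite N (sκ * ξ) / ξ^N) * ((1 - 1/ξ^2) ^ ((1:ℝ)/4)) *
      Real.exp (κ * ((1/2)*ξ*Real.sqrt (ξ^2-1) - ξ^2/2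
        - (1/2)*Real.log (ξ + Real.sqrt (ξ^2-1)) + (1/2)*Real.log ξ)))
      =ᶠ[atTop]
      (fun ξ : ℝ =>
        osc N (sκ * ξ) * (2 * Real.sqrt Real.pi) *
          κ ^ ((1 : ℝ) / 6) * (ξ ^ 2 - 1) ^ ((1 : ℝ) / 4) *
          Real.exp (κ *
            ((1 / 2) * ξ * Real.sqrt (ξ ^ 2 - 1) -
              (1 / 2) * Real.log (ξ + Real.sqrt (ξ ^ 2 - 1))))) := by
    filter_upwards [eventually_gt_atTop (1:ℝ)] with ξ hξ
    have hξ0 : 0 < ξ := lt_trans one_pos hξ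
    have hsq : (0:ℝ) < ξ^2 - 1 := by nlinarith
    -- (sκ ξ)² = κ ξ²
    have ha : (sκ * ξ)^2 = κ * ξ^2 := by rw [mul_pow, hsκ2]
    -- split exponential
    have hb : Real.exp (κ * ((1/2)*ξ*Real.sqrt (ξ^2-1) - ξ^2/2
          - (1/2)*Real.log (ξ + Real.sqrt (ξ^2-1)) + (1/2)*Real.log ξ))
        = Real.exp (κ * ((1/2)*ξ*Real.sqrt (ξ^2-1)
            - (1/2)*Real.log (ξ + Real.sqrt (ξ^2-1))))
          * Real.exp (-(κ*ξ^2)/2) * (ξ^N * Real.sqrt ξ) := by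
      have harg : κ * ((1/2)*ξ*Real.sqrt (ξ^2-1) - ξ^2/2
          - (1/2)*Real.log (ξ + Real.sqrt (ξ^2-1)) + (1/2)*Real.log ξ)
          = κ * ((1/2)*ξ*Real.sqrt (ξ^2-1) - (1/2)*Real.log (ξ + Real.sqrt (ξ^2-1)))
            + (-(κ*ξ^2)/2) + ((N:ℝ) * Real.log ξ + (1/2) * Real.log ξ) := by
        rw [hκdef]; ring
      rw [harg, Real.exp_add, Real.exp_add, Real.exp_add]
      congr 1
      rw [Real.exp_nat_mul, Real.exp_log hξ0,
        show (1/2) * Real.log ξ = Real.log (Real.sqrt ξ) from by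
          rw [Real.log_sqrt hξ0.le]; ring,
        Real.exp_log (Real.sqrt_pos.mpr hξ0)]
    -- algebraic prefactor identity
    have hc' : (ξ^2 - 1) ^ ((1:ℝ)/4) = (1 - 1/ξ^2) ^ ((1:ℝ)/4) * Real.sqrt ξ := by
      have h1 : (1 - 1/ξ^2) = (ξ^2-1)/ξ^2 := by field_simp
      have h2 : ((ξ^2-1)/ξ^2) ^ ((1:ℝ)/4) = (ξ^2-1) ^ ((1:ℝ)/4) / (ξ^2) ^ ((1:ℝ)/4) :=
        Real.div_rpow hsq.le (sq_nonneg ξ) ((1:ℝ)/4)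
      have h3 : (ξ^2 : ℝ) ^ ((1:ℝ)/4) = Real.sqrt ξ := by
        rw [show ξ^2 = (Real.sqrt ξ)^4 by
            rw [show (Real.sqrt ξ)^4 = ((Real.sqrt ξ)^2)^2 by ring,
              Real.sq_sqrt hξ0.le]]
        rw [← Real.rpow_natCast (Real.sqrt ξ) 4, ← Real.rpow_mul (Real.sqrt_nonneg ξ)]
        norm_num
      rw [h1, h2, h3]
      field_simp
    -- put everything together
    simp only [osc]
    rw [ha, hb, hc']
    have hξN : (ξ:ℝ)^N ≠ 0 := pow_ne_zero _ (ne_of_gt hξ0)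
    field_simp
    rw [hCdef]; ring
  -- value of the limit
  have hval : C * (2^N * sκ^N) * 1 * Real.exp (κ * (-(1/4) - (1/2)*Real.log 2))
      = 2 * Real.sqrt Real.pi * κ ^ ((1 : ℝ) / 6) *
        hNorm N ^ (-(1 : ℝ) / 2) * (2 * ((N : ℝ) + 1 / 2)) ^ ((N : ℝ) / 2) *
        Real.exp (-((N : ℝ) + 1 / 2) / 2) *
        (2 : ℝ) ^ ((N : ℝ) - ((N : ℝ) + 1 / 2)) := by
    have h2κ : (2 : ℝ) * ((N : ℝ) + 1/2) = κ := by rw [hκdef]; ring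
    have hsn : sκ^N = κ ^ ((N:ℝ)/2) := by
      rw [hsκdef, Real.sqrt_eq_rpow, ← Real.rpow_natCast (κ ^ ((1:ℝ)/2)) N,
        ← Real.rpow_mul hκ0.le]
      congr 1
      ring
    have hexp : Real.exp (κ * (-(1/4) - (1/2)*Real.log 2))
        = Real.exp (-((N : ℝ) + 1 / 2) / 2) * Real.exp (Real.log 2 * (-(κ/2))) := by
      rw [← Real.exp_add]
      congr 1
      rw [hκdef]; ring
    have h2r : (2:ℝ)^N * Real.exp (Real.log 2 * (-(κ/2)))
        = (2 : ℝ) ^ ((N : ℝ) - ((N : ℝ) + 1 / 2)) := by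
      rw [← Real.rpow_def_of_pos (by norm_num : (0:ℝ) < 2),
        ← Real.rpow_natCast (2:ℝ) N, ← Real.rpow_add (by norm_num : (0:ℝ) < 2)]
      congr 1
      rw [hκdef]; ring
    rw [h2κ, hsn, hexp, ← hsn]  -- keep κ^(N/2); adjust below
    rw [hCdef]
    calc hNorm N ^ (-(1:ℝ)/2) * (2 * Real.sqrt Real.pi) * κ ^ ((1:ℝ)/6) *
          (2^N * sκ^N) * 1 *
          (Real.exp (-((N : ℝ) + 1 / 2) / 2) * Real.exp (Real.log 2 * (-(κ/2))))
        = 2 * Real.sqrt Real.pi * κ ^ ((1 : ℝ) / 6) *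
          hNorm N ^ (-(1 : ℝ) / 2) * sκ^N *
          Real.exp (-((N : ℝ) + 1 / 2) / 2) *
          ((2:ℝ)^N * Real.exp (Real.log 2 * (-(κ/2)))) := by ring
      _ = _ := by rw [h2r, hsn]
  rw [show (2 * Real.sqrt Real.pi * (2 * (N : ℝ) + 1) ^ ((1 : ℝ) / 6) *
        hNorm N ^ (-(1 : ℝ) / 2) * (2 * ((N : ℝ) + 1 / 2)) ^ ((N : ℝ) / 2) *
        Real.exp (-((N : ℝ) + 1 / 2) / 2) *
        (2 : ℝ) ^ ((N : ℝ) - ((N : ℝ) + 1 / 2))) = C * (2^N * sκ^N) * 1 *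
        Real.exp (κ * (-(1/4) - (1/2)*Real.log 2)) from hval.symm]
  exact hG.congr' heq
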